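/- For integers K > t ≥ 1, (1/K) Σ_{j=0}^{K−1} cos^{2t}(jπ/K) = 2^{1−2t} · C(2t−1, t−1). -/

import Mathlib

open Complex Finset

private lemma geom_exp_zero (K : ℕ) (m : ℤ) (hm : m ≠ 0) (hm' : m.natAbs < K) :
    ∑ j ∈ Finset.range K, Complex.exp (2 * Real.pi * Complex.I * m / K) ^ j = 0 := by
  have hK0 : 0 < K := lt_of_le_of_lt (Nat.zero_le _) hm'
  have hKC : (K : ℂ) ≠ 0 := Nat.cast_ne_zero.mpr hK0.ne'
  set z := Complex.exp (2 * Real.pi * Complex.I * m / K) with hz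
  have hz1 : z ≠ 1 := by
    intro h
    rw [hz, Complex.exp_eq_one_iff] at h
    obtain ⟨n, hn⟩ := h
    have hπ : (Real.pi : ℂ) ≠ 0 := Complex.ofReal_ne_zero.mpr Real.pi_ne_zero
    have h2 : (2 : ℂ) * Real.pi * Complex.I ≠ 0 := by
      simp [hπ, Complex.I_ne_zero]
    have hmn : (m : ℂ) = n * K := by
      field_simp at hn
      have : (2 : ℂ) * Real.pi * Complex.I * m = (2 : ℂ) * Real.pi * Complex.I * (n * K) := by
        linear_combination (2 * (Real.pi : ℂ) * Complex.I) * hn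
      exact mul_left_cancel₀ h2 this
    have hmn' : m = n * K := by exact_mod_cast hmn
    rcases eq_or_ne n 0 with h0 | h0
    · exact hm (by simp [hmn', h0])
    · have h1n : 1 ≤ |n| := Int.one_le_abs (by simpa using h0)
      have : (K : ℤ) ≤ |m| := by
        rw [hmn', abs_mul, abs_of_nonneg (by positivity : (0:ℤ) ≤ (K:ℤ))]
        exact le_mul_of_one_le_left (by positivity) h1n
      rw [Int.abs_eq_natAbs] at this
      omega
  have hzK : z ^ K = 1 := by
    rw [hz, ← Complex.exp_nat_mul]
    have : (K : ℂ) * (2 * Real.pi * Complex.I * m / K) = m * (2 * Real.pi * Complex.I) := by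
      field_simp
    rw [this]
    exact Complex.exp_int_mul_two_pi_mul_I m
  rw [geom_sum_eq hz1, hzK]
  simp

private lemma choose_two_mul (t : ℕ) (ht : 1 ≤ t) :
    Nat.choose (2 * t) t = 2 * Nat.choose (2 * t - 1) (t - 1) := by
  obtain ⟨s, rfl⟩ := Nat.exists_eq_add_of_le ht
  have e1 : 2 * (1 + s) - 1 = 2 * s + 1 := by omega
  have e2 : 1 + s - 1 = s := by omega
  have e3 : 2 * (1 + s) = (2 * s + 1) + 1 := by omega
  have e4 : 1 + s = s + 1 := by omega
  rw [e1, e2, e3, e4, Nat.choose_succ_succ]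
  have h5 : (2 * s + 1).choose (s + 1) = (2 * s + 1).choose s := by
    rw [← Nat.choose_symm (by omega : s ≤ 2 * s + 1)]
    congr 1; omega
  rw [h5]; omega

/-- For integers `K > t ≥ 1`,
`(1/K) Σ_{j=0}^{K−1} cos^{2t}(jπ/K) = 2^{1−2t} · C(2t−1, t−1)`. -/
theorem cos_pow_sum_eq_central_binom
    (K t : ℕ) (ht : 1 ≤ t) (htK : t < K) :
    (1 / (K : ℝ)) * ∑ j ∈ Finset.range K, Real.cos ((j : ℝ) * Real.pi / (K : ℝ)) ^ (2 * t)
      = (2 : ℝ) ^ ((1 : ℤ) - 2 * (t : ℤ)) * (Nat.choose (2 * t - 1) (t - 1) : ℝ) := by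
  have hK0 : 0 < K := lt_of_le_of_lt (Nat.zero_le _) htK
  have hKR : (K : ℝ) ≠ 0 := Nat.cast_ne_zero.mpr hK0.ne'
  have hKC : (K : ℂ) ≠ 0 := Nat.cast_ne_zero.mpr hK0.ne'
  have key : ∑ j ∈ Finset.range K, Real.cos ((j : ℝ) * Real.pi / (K : ℝ)) ^ (2 * t)
      = (K : ℝ) * ((Nat.choose (2 * t) t : ℝ) / 2 ^ (2 * t)) := by
    have keyC : ((∑ j ∈ Finset.range K,
        Real.cos ((j : ℝ) * Real.pi / (K : ℝ)) ^ (2 * t) : ℝ) : ℂ)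
        = (((K : ℝ) * ((Nat.choose (2 * t) t : ℝ) / 2 ^ (2 * t)) : ℝ) : ℂ) := by
      simp only [Complex.ofReal_sum, Complex.ofReal_pow, Complex.ofReal_cos]
      have step1 : ∀ j ∈ Finset.range K,
          (Complex.cos (((j : ℝ) * Real.pi / (K : ℝ) : ℝ) : ℂ)) ^ (2 * t)
          = (1 / 2 ^ (2 * t) : ℂ) * ∑ k ∈ Finset.range (2 * t + 1),
              Complex.exp (2 * Real.pi * Complex.I * ((k : ℤ) - (t : ℤ)) / K) ^ j
                * (Nat.choose (2 * t) k : ℂ) := by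
        intro j hj
        have hc : (2 : ℂ) * Complex.cos (((j : ℝ) * Real.pi / (K : ℝ) : ℝ) : ℂ)
            = Complex.exp ((((j : ℝ) * Real.pi / (K : ℝ) : ℝ) : ℂ) * Complex.I)
              + Complex.exp (-(((j : ℝ) * Real.pi / (K : ℝ) : ℝ) : ℂ) * Complex.I) :=
          Complex.two_cos _
        have hcos : Complex.cos (((j : ℝ) * Real.pi / (K : ℝ) : ℝ) : ℂ)
            = (Complex.exp ((((j : ℝ) * Real.pi / (K : ℝ) : ℝ) : ℂ) * Complex.I)
              + Complex.exp (-(((j : ℝ) * Real.pi / (K : ℝ) : ℝ) : ℂ) * Complex.I)) / 2 := by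
          rw [← hc]; ring
        rw [hcos, div_pow, add_pow]
        have hsum : ∑ m ∈ Finset.range (2 * t + 1),
            Complex.exp ((((j : ℝ) * Real.pi / (K : ℝ) : ℝ) : ℂ) * Complex.I) ^ m
              * Complex.exp (-(((j : ℝ) * Real.pi / (K : ℝ) : ℝ) : ℂ) * Complex.I) ^ (2 * t - m)
              * (Nat.choose (2 * t) m : ℂ)
            = ∑ k ∈ Finset.range (2 * t + 1),
              Complex.exp (2 * Real.pi * Complex.I * ((k : ℤ) - (t : ℤ)) / K) ^ j
                * (Nat.choose (2 * t) k : ℂ) := by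
          apply Finset.sum_congr rfl
          intro k hk
          simp only [Finset.mem_range] at hk
          congr 1
          rw [← Complex.exp_nat_mul, ← Complex.exp_nat_mul, ← Complex.exp_add,
              ← Complex.exp_nat_mul]
          congr 1
          push_cast [Nat.cast_sub (by omega : k ≤ 2 * t)]
          field_simp
          ring
        rw [hsum]
        ring
      rw [Finset.sum_congr rfl step1, ← Finset.mul_sum, Finset.sum_comm]
      have inner : ∀ k ∈ Finset.range (2 * t + 1),
          (∑ j ∈ Finset.range K,
            Complex.exp (2 * Real.pi * Complex.I * ((k : ℤ) - (t : ℤ)) / K) ^ j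
              * (Nat.choose (2 * t) k : ℂ))
          = (if k = t then (K : ℂ) * (Nat.choose (2 * t) t : ℂ) else 0) := by
        intro k hk
        simp only [Finset.mem_range] at hk
        rw [← Finset.sum_mul]
        rcases eq_or_ne k t with rfl | hne
        · simp
        · have h0 := geom_exp_zero K ((k : ℤ) - (t : ℤ)) (by omega) (by omega)
          push_cast at h0 ⊢
          rw [h0, zero_mul, if_neg hne]
      rw [Finset.sum_congr rfl inner, Finset.sum_ite_eq' (Finset.range (2 * t + 1))]
      simp only [Finset.mem_range, if_pos (by omega : t < 2 * t + 1)]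
      push_cast
      field_simp
    exact Complex.ofReal_injective keyC
  rw [key, choose_two_mul t ht]
  have h2 : (2 : ℝ) ^ ((1 : ℤ) - 2 * (t : ℤ)) = 2 / 2 ^ (2 * t) := by
    rw [zpow_sub₀ (by norm_num : (2:ℝ) ≠ 0), zpow_one]
    congr 1
  rw [h2]
  push_cast
  field_simp
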